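/- arXiv:1602.01768 — 2 statements merged into one kernel-verified Lean document; each statement's English description precedes it below -/
import Mathlib

section
/- Let A ∈ ℝ^{n×n} be symmetric and invertible, W ∈ ℝ^{n×n} symmetric positive definite, S ∈ ℝ^{n×q} of full column rank, and X_k ∈ ℝ^{n×n} symmetric. Set Λ := (S^T A W A S)^{-1}. Then X_{k+1} := X_k − (X_k A − I) S Λ S^T A W + W A S Λ S^T (A X_k − I)(A S Λ S^T A W − I) is the unique minimizer of ‖X − X_k‖_{F(W^{-1})} over the set {X ∈ ℝ^{n×n} : S^T A X = S^T and X = X^T}. -/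
open Matrix BigOperators

/-- Squared weighted Frobenius norm: `‖X‖_{F(W⁻¹)}² = Tr(Xᵀ W⁻¹ X W⁻¹)`. -/
noncomputable def wFNormSq {n : ℕ} (W X : Matrix (Fin n) (Fin n) ℝ) : ℝ :=
  (Xᵀ * W⁻¹ * X * W⁻¹).trace

/-- Weighted Frobenius norm `‖X‖_{F(W⁻¹)}`. -/
noncomputable def wFNorm {n : ℕ} (W X : Matrix (Fin n) (Fin n) ℝ) : ℝ :=
  Real.sqrt (wFNormSq W X)

lemma trace_tr_mul_self_nonneg {n : ℕ} (Z : Matrix (Fin n) (Fin n) ℝ) :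
    0 ≤ (Zᵀ * Z).trace := by
  rw [Matrix.trace]
  refine Finset.sum_nonneg fun i _ => ?_
  simp only [Matrix.diag, Matrix.mul_apply, Matrix.transpose_apply]
  exact Finset.sum_nonneg fun j _ => mul_self_nonneg _

lemma eq_zero_of_trace_tr_mul_self {n : ℕ} (Z : Matrix (Fin n) (Fin n) ℝ)
    (h : (Zᵀ * Z).trace = 0) : Z = 0 := by
  ext i j
  have h0 : ∀ k, (0:ℝ) ≤ (Zᵀ * Z) k k := fun k => by
    simp only [Matrix.mul_apply, Matrix.transpose_apply]
    exact Finset.sum_nonneg fun l _ => mul_self_nonneg _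
  have h1 := (Finset.sum_eq_zero_iff_of_nonneg (fun k _ => h0 k)).1 h j (Finset.mem_univ j)
  simp only [Matrix.mul_apply, Matrix.transpose_apply] at h1
  have h2 := (Finset.sum_eq_zero_iff_of_nonneg
    (fun l _ => mul_self_nonneg (Z l j))).1 h1 i (Finset.mem_univ i)
  simpa using h2

lemma mulVec_inj_of_rank {n q : ℕ} (S : Matrix (Fin n) (Fin q) ℝ) (hS : S.rank = q) :
    ∀ x : Fin q → ℝ, S *ᵥ x = 0 → x = 0 := by
  have h := S.mulVecLin.finrank_range_add_finrank_ker
  rw [Matrix.rank] at hS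
  rw [hS] at h
  simp [Module.finrank_fintype_fun_eq_card] at h
  have hker : LinearMap.ker S.mulVecLin = ⊥ := h
  intro x hx
  have : x ∈ LinearMap.ker S.mulVecLin := by simpa [Matrix.mulVecLin] using hx
  rw [hker] at this; simpa using this

theorem stmt3 {n q : ℕ} (A W : Matrix (Fin n) (Fin n) ℝ)
    (S : Matrix (Fin n) (Fin q) ℝ) (Xk : Matrix (Fin n) (Fin n) ℝ)
    (hA : IsUnit A.det) (hAsym : Aᵀ = A) (hW : W.PosDef) (hS : S.rank = q)
    (hXk : Xkᵀ = Xk) :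
    let Λ := (Sᵀ * A * W * A * S)⁻¹
    let Xnext := Xk - (Xk * A - 1) * S * Λ * Sᵀ * A * W +
      W * A * S * Λ * Sᵀ * (A * Xk - 1) * (A * S * Λ * Sᵀ * A * W - 1)
    (Sᵀ * A * Xnext = Sᵀ ∧ Xnext = Xnextᵀ) ∧
    ∀ X : Matrix (Fin n) (Fin n) ℝ, Sᵀ * A * X = Sᵀ → X = Xᵀ → X ≠ Xnext →
      wFNorm W (Xnext - Xk) < wFNorm W (X - Xk) := by
  intro Λ Xnext
  -- symmetry of W
  have hWsym : Wᵀ = W := by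
    have := hW.isHermitian
    rwa [← Matrix.conjTranspose_eq_transpose_of_trivial]
  -- M = Sᵀ A W A S is positive definite
  have hSinj := mulVec_inj_of_rank S hS
  have hM : (Sᵀ * A * W * A * S).PosDef := by
    have hB : Sᵀ * A * W * A * S = (A * S)ᵀ * W * (A * S) := by
      rw [Matrix.transpose_mul, hAsym]; simp only [Matrix.mul_assoc]
    rw [hB]
    refine Matrix.PosDef.of_dotProduct_mulVec_pos ?_ ?_
    · have := Matrix.isHermitian_conjTranspose_mul_mul (A * S) hW.isHermitian
      rwa [Matrix.conjTranspose_eq_transpose_of_trivial] at this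
    · intro x hx
      have hASx : (A * S) *ᵥ x ≠ 0 := by
        intro h0
        rw [← Matrix.mulVec_mulVec] at h0
        have hinj := Matrix.mulVec_injective_iff_isUnit.2 (Matrix.isUnit_iff_isUnit_det A |>.2 hA)
        have hS0 : S *ᵥ x = 0 := hinj (by simpa using h0)
        exact hx (hSinj x hS0)
      have hpos := hW.dotProduct_mulVec_pos hASx
      have heq : star x ⬝ᵥ ((A * S)ᵀ * W * (A * S)) *ᵥ x
          = star ((A * S) *ᵥ x) ⬝ᵥ W *ᵥ ((A * S) *ᵥ x) := by
        simp only [star_trivial, ← Matrix.mulVec_mulVec, Matrix.dotProduct_mulVec,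
          Matrix.vecMul_transpose]
      rw [heq]; exact hpos
  have hMdet : IsUnit (Sᵀ * A * W * A * S).det := hM.det_pos.ne'.isUnit
  have hMΛ : (Sᵀ * A * W * A * S) * Λ = 1 := Matrix.mul_nonsing_inv _ hMdet
  have hMsym : (Sᵀ * A * W * A * S)ᵀ = Sᵀ * A * W * A * S := by
    have := hM.isHermitian
    rwa [← Matrix.conjTranspose_eq_transpose_of_trivial]
  have hΛsym : Λᵀ = Λ := by
    show ((Sᵀ * A * W * A * S)⁻¹)ᵀ = (Sᵀ * A * W * A * S)⁻¹
    rw [Matrix.transpose_nonsing_inv, hMsym]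
  -- key contraction identities
  have hc1 : Sᵀ * (A * (W * (A * (S * Λ)))) = 1 := by
    simpa only [Matrix.mul_assoc] using hMΛ
  have hc : ∀ t : Matrix (Fin q) (Fin n) ℝ, Sᵀ * (A * (W * (A * (S * (Λ * t))))) = t := by
    intro t
    calc Sᵀ * (A * (W * (A * (S * (Λ * t))))) = (Sᵀ * (A * (W * (A * (S * Λ))))) * t := by
          simp only [Matrix.mul_assoc]
      _ = t := by rw [hc1, Matrix.one_mul]
  -- constraints
  have hcons : Sᵀ * A * Xnext = Sᵀ := by
    show Sᵀ * A * (Xk - (Xk * A - 1) * S * Λ * Sᵀ * A * W +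
      W * A * S * Λ * Sᵀ * (A * Xk - 1) * (A * S * Λ * Sᵀ * A * W - 1)) = Sᵀ
    simp only [Matrix.mul_sub, Matrix.sub_mul, Matrix.mul_add, Matrix.add_mul,
      Matrix.mul_one, Matrix.one_mul, Matrix.mul_assoc, hc, hc1]
    abel
  have hsymXn : Xnext = Xnextᵀ := by
    show Xnext = Xnextᵀ
    simp only [Xnext, Matrix.transpose_add, Matrix.transpose_sub, Matrix.transpose_mul,
      Matrix.transpose_one, Matrix.transpose_transpose, hAsym, hWsym, hXk, hΛsym]
    simp only [Matrix.mul_sub, Matrix.sub_mul, Matrix.mul_add, Matrix.add_mul,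
      Matrix.mul_one, Matrix.one_mul, Matrix.mul_assoc]
    abel
  refine ⟨⟨hcons, hsymXn⟩, ?_⟩
  -- W⁻¹ facts
  have hWdet : IsUnit W.det := hW.det_pos.ne'.isUnit
  have hWWi : ∀ t : Matrix (Fin n) (Fin n) ℝ, W * (W⁻¹ * t) = t := by
    intro t
    rw [← Matrix.mul_assoc, Matrix.mul_nonsing_inv _ hWdet, Matrix.one_mul]
  have hWiW : ∀ t : Matrix (Fin n) (Fin q) ℝ, W⁻¹ * (W * t) = t := by
    intro t
    rw [← Matrix.mul_assoc, Matrix.nonsing_inv_mul _ hWdet, Matrix.one_mul]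
  have hWisym : (W⁻¹)ᵀ = W⁻¹ := by
    have := hW.inv.isHermitian
    rwa [← Matrix.conjTranspose_eq_transpose_of_trivial]
  -- square root of W⁻¹
  open scoped MatrixOrder in
  set C := CFC.sqrt W⁻¹ with hCdef
  have hC2 : C * C = W⁻¹ := by
    open scoped MatrixOrder in
    exact CFC.sqrt_mul_sqrt_self _ (Matrix.nonneg_iff_posSemidef.2 hW.inv.posSemidef)
  have hCsym : Cᵀ = C := by
    open scoped MatrixOrder in
    have := (Matrix.nonneg_iff_posSemidef.1 (CFC.sqrt_nonneg W⁻¹)).1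
    rwa [← Matrix.conjTranspose_eq_transpose_of_trivial]
  have hCdet : IsUnit C.det := by
    have h1 : C.det * C.det = W⁻¹.det := by rw [← Matrix.det_mul, hC2]
    have h2 : W⁻¹.det ≠ 0 := hW.inv.det_pos.ne'
    have : C.det ≠ 0 := fun h => h2 (by rw [← h1, h]; ring)
    exact this.isUnit
  -- trace identity
  have htr : ∀ Z : Matrix (Fin n) (Fin n) ℝ,
      (Zᵀ * W⁻¹ * Z * W⁻¹).trace = ((C * Z * C)ᵀ * (C * Z * C)).trace := by
    intro Z
    have e1 : (C * Z * C)ᵀ * (C * Z * C) = C * (Zᵀ * (C * C) * Z * C) := by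
      simp only [Matrix.transpose_mul, hCsym, Matrix.mul_assoc]
    have e2 : Zᵀ * (C * C) * Z * C * C = Zᵀ * (C * C) * Z * (C * C) :=
      Matrix.mul_assoc _ C C
    conv_rhs => rw [e1, Matrix.trace_mul_comm, e2, hC2]
  have hnneg : ∀ Z : Matrix (Fin n) (Fin n) ℝ, 0 ≤ wFNormSq W Z := by
    intro Z
    rw [wFNormSq, htr]
    exact trace_tr_mul_self_nonneg _
  have hpos : ∀ Z : Matrix (Fin n) (Fin n) ℝ, Z ≠ 0 → 0 < wFNormSq W Z := by
    intro Z hZ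
    rcases lt_or_eq_of_le (hnneg Z) with h | h
    · exact h
    · exfalso
      apply hZ
      rw [wFNormSq, htr] at h
      have hCZC : C * Z * C = 0 := eq_zero_of_trace_tr_mul_self _ h.symm
      have : C⁻¹ * (C * Z * C) * C⁻¹ = Z := by
        rw [← Matrix.mul_assoc, ← Matrix.mul_assoc, Matrix.nonsing_inv_mul _ hCdet,
          Matrix.one_mul, Matrix.mul_assoc, Matrix.mul_nonsing_inv _ hCdet, Matrix.mul_one]
      rw [← this, hCZC, Matrix.mul_zero, Matrix.zero_mul]
  -- main minimality argument
  intro X hXc hXsym hXne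
  set Y := X - Xnext with hYdef
  have hYne : Y ≠ 0 := sub_ne_zero.2 hXne
  have hYsym : Yᵀ = Y := by
    rw [hYdef, Matrix.transpose_sub, ← hXsym, ← hsymXn]
  have hSAY : Sᵀ * A * Y = 0 := by
    rw [hYdef, Matrix.mul_sub, hXc, hcons, sub_self]
  have hSAYt : ∀ t : Matrix (Fin n) (Fin n) ℝ, Sᵀ * (A * (Y * t)) = 0 := by
    intro t
    have : (Sᵀ * A * Y) * t = 0 := by rw [hSAY, Matrix.zero_mul]
    simpa only [Matrix.mul_assoc] using this
  have hYAS : Y * (A * S) = 0 := by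
    have := congrArg Matrix.transpose hSAY
    simp only [Matrix.transpose_mul, Matrix.transpose_transpose, hAsym, hYsym,
      Matrix.transpose_zero] at this
    simpa only [Matrix.mul_assoc] using this
  have hDsym : (Xnext - Xk)ᵀ = Xnext - Xk := by
    rw [Matrix.transpose_sub, ← hsymXn, hXk]
  -- cross term computation
  have hDW : (Xnext - Xk) * W⁻¹ * Y * W⁻¹ =
      -((W * A * S) * (Λ * Sᵀ * (A * Xk - 1) * (W⁻¹ * (Y * W⁻¹)))) := by
    show (Xk - (Xk * A - 1) * S * Λ * Sᵀ * A * W +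
      W * A * S * Λ * Sᵀ * (A * Xk - 1) * (A * S * Λ * Sᵀ * A * W - 1) - Xk)
        * W⁻¹ * Y * W⁻¹ = _
    simp only [Matrix.mul_sub, Matrix.sub_mul, Matrix.mul_add, Matrix.add_mul,
      Matrix.mul_one, Matrix.one_mul, Matrix.mul_assoc, hWWi, hSAYt,
      Matrix.mul_zero, Matrix.zero_mul, Matrix.neg_mul, Matrix.mul_neg, neg_neg,
      sub_zero, zero_sub, add_zero, zero_add]
    abel
  have hcross : ((Xnext - Xk)ᵀ * W⁻¹ * Y * W⁻¹).trace = 0 := by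
    rw [hDsym, hDW, Matrix.trace_neg, Matrix.trace_mul_comm]
    have hz : (Λ * Sᵀ * (A * Xk - 1) * (W⁻¹ * (Y * W⁻¹))) * (W * A * S) = 0 := by
      simp only [Matrix.mul_sub, Matrix.sub_mul, Matrix.mul_one, Matrix.one_mul,
        Matrix.mul_assoc, hWiW, hYAS, Matrix.mul_zero, Matrix.zero_mul, sub_zero, sub_self]
    rw [hz, Matrix.trace_zero, neg_zero]
  -- Pythagoras
  have hpyth : wFNormSq W (X - Xk) = wFNormSq W (Xnext - Xk) + wFNormSq W Y := by
    have hsplit : X - Xk = (Xnext - Xk) + Y := by rw [hYdef]; abel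
    rw [wFNormSq, hsplit]
    set D := Xnext - Xk with hDdef
    have hcross' : (Yᵀ * W⁻¹ * D * W⁻¹).trace = 0 := by
      rw [← Matrix.trace_transpose]
      have e : (Yᵀ * W⁻¹ * D * W⁻¹)ᵀ = W⁻¹ * (Dᵀ * W⁻¹ * Y) := by
        simp only [Matrix.transpose_mul, Matrix.transpose_transpose, hWisym, Matrix.mul_assoc]
      rw [e, Matrix.trace_mul_comm]
      have e2 : Dᵀ * W⁻¹ * Y * W⁻¹ = Dᵀ * W⁻¹ * Y * W⁻¹ := rfl
      calc ((Dᵀ * W⁻¹ * Y) * W⁻¹).trace = (Dᵀ * W⁻¹ * Y * W⁻¹).trace := rfl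
        _ = 0 := hcross
    have expand : (D + Y)ᵀ * W⁻¹ * (D + Y) * W⁻¹ =
        Dᵀ * W⁻¹ * D * W⁻¹ + Yᵀ * W⁻¹ * Y * W⁻¹ +
        (Dᵀ * W⁻¹ * Y * W⁻¹ + Yᵀ * W⁻¹ * D * W⁻¹) := by
      simp only [Matrix.transpose_add, Matrix.add_mul, Matrix.mul_add]
      abel
    rw [expand, Matrix.trace_add, Matrix.trace_add, Matrix.trace_add, hcross, hcross',
      add_zero, add_zero]
    rfl
  -- conclude
  rw [wFNorm, wFNorm]
  apply Real.sqrt_lt_sqrt (hnneg _)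
  rw [hpyth]
  have := hpos Y hYne
  linarith
end

section
/- Let A ∈ ℝ^{n×n} be symmetric and invertible, W ∈ ℝ^{n×n} symmetric positive definite, and let S_1, …, S_r with S_i ∈ ℝ^{n×q_i} each have full column rank, with probabilities p_i > 0, Σ_{i=1}^r p_i = 1. Fix a symmetric X_0 ∈ ℝ^{n×n}; for each path s = (s_0, …, s_{k−1}) ∈ {1,…,r}^k define X_k(s) recursively by the symmetric update X_{j+1}(s) = A^{-1} + (I − W Z_{s_j})(X_j(s) − A^{-1})(I − Z_{s_j} W), where Z_i := A S_i (S_i^T A W A S_i)^{-1} S_i^T A. Then, with ρ := 1 − λ_min(W^{1/2}(Σ_{i=1}^r p_i Z_i)W^{1/2}), the expected squared error satisfies Σ_{s ∈ {1,…,r}^k} (Π_{j<k} p_{s_j}) ‖X_k(s) − A^{-1}‖_{F(W^{-1})}² ≤ ρ^k ‖X_0 − A^{-1}‖_{F(W^{-1})}². -/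
open Matrix BigOperators

/-- `Z = A S (Sᵀ A W A S)⁻¹ Sᵀ A` (symmetric variant, `A` symmetric). -/
noncomputable def ZmatSym {n q : ℕ} (A W : Matrix (Fin n) (Fin n) ℝ)
    (S : Matrix (Fin n) (Fin q) ℝ) : Matrix (Fin n) (Fin n) ℝ :=
  A * S * (Sᵀ * A * W * A * S)⁻¹ * Sᵀ * A

/-- One step of the symmetric sketch-and-project method, in fixed-point form. -/
noncomputable def symStep {n q : ℕ} (A W : Matrix (Fin n) (Fin n) ℝ)
    (S : Matrix (Fin n) (Fin q) ℝ) (X : Matrix (Fin n) (Fin n) ℝ) :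
    Matrix (Fin n) (Fin n) ℝ :=
  A⁻¹ + (1 - W * ZmatSym A W S) * (X - A⁻¹) * (1 - ZmatSym A W S * W)

/-- The square root `Matrix.PosSemidef.sqrt` of the older Mathlib, spelled out. -/
noncomputable def posSemidefSqrtOld {n : ℕ} {W : Matrix (Fin n) (Fin n) ℝ} (hA : W.PosSemidef) :
    Matrix (Fin n) (Fin n) ℝ :=
  hA.1.eigenvectorUnitary.1 * diagonal ((↑) ∘ (√·) ∘ hA.1.eigenvalues) *
    (star hA.1.eigenvectorUnitary : Matrix (Fin n) (Fin n) ℝ)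

/- ----------------- auxiliary lemmas ----------------- -/

lemma psd_iff_eq_ct_mul_self {n : ℕ} {B : Matrix (Fin n) (Fin n) ℝ} :
    B.PosSemidef ↔ ∃ C : Matrix (Fin n) (Fin n) ℝ, B = Cᴴ * C := by
  open scoped MatrixOrder in
  constructor
  · intro h
    obtain ⟨C, hC⟩ := CStarAlgebra.nonneg_iff_eq_star_mul_self.mp h.nonneg
    exact ⟨C, hC⟩
  · rintro ⟨C, rfl⟩
    exact Matrix.posSemidef_conjTranspose_mul_self C

lemma posSemidefSqrtOld_transpose {n : ℕ} {W : Matrix (Fin n) (Fin n) ℝ} (hA : W.PosSemidef) :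
    (posSemidefSqrtOld hA)ᵀ = posSemidefSqrtOld hA := by
  rw [← Matrix.conjTranspose_eq_transpose_of_trivial]
  unfold posSemidefSqrtOld
  rw [star_eq_conjTranspose, conjTranspose_mul, conjTranspose_mul, conjTranspose_conjTranspose,
    diagonal_conjTranspose, Matrix.mul_assoc]
  simp [Matrix.mul_assoc]

lemma posSemidefSqrtOld_mul_self {n : ℕ} {W : Matrix (Fin n) (Fin n) ℝ} (hA : W.PosSemidef) :
    posSemidefSqrtOld hA * posSemidefSqrtOld hA = W := by
  unfold posSemidefSqrtOld
  set U : Matrix (Fin n) (Fin n) ℝ := (hA.1.eigenvectorUnitary : Matrix (Fin n) (Fin n) ℝ) with hU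
  have hUU : star U * U = 1 := (Matrix.mem_unitaryGroup_iff').mp hA.1.eigenvectorUnitary.2
  have hspec : W = U * Matrix.diagonal (RCLike.ofReal ∘ hA.1.eigenvalues) * star U :=
    hA.1.spectral_theorem
  set D : Matrix (Fin n) (Fin n) ℝ :=
    diagonal ((fun x : ℝ => x) ∘ (fun x => √x) ∘ hA.1.eigenvalues) with hDd
  have hD : D * D = Matrix.diagonal (RCLike.ofReal ∘ hA.1.eigenvalues) := by
    rw [hDd, diagonal_mul_diagonal]
    congr 1
    funext j
    simp [Real.mul_self_sqrt (hA.eigenvalues_nonneg j)]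
  rw [hspec, ← hD]
  calc U * D * star U * (U * D * star U) = U * D * (star U * U) * D * star U := by
        simp only [Matrix.mul_assoc]
    _ = _ := by rw [hUU, Matrix.mul_one]; simp only [Matrix.mul_assoc]


lemma trace_transpose_mul_self_nonneg {n : ℕ} (B : Matrix (Fin n) (Fin n) ℝ) :
    0 ≤ (Bᵀ * B).trace := by
  rw [Matrix.trace]
  refine Finset.sum_nonneg fun i _ => ?_
  rw [Matrix.diag_apply, Matrix.mul_apply]
  exact Finset.sum_nonneg fun j _ => by
    simpa [Matrix.transpose_apply] using mul_self_nonneg (B j i)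

lemma trace_sandwich {n : ℕ} (Q R Y : Matrix (Fin n) (Fin n) ℝ)
    (hQs : Qᵀ = Q) (hQ2 : Q * Q = Q) (hRs : Rᵀ = R) (hR2 : R * R = R) :
    ((Q * Y * R)ᵀ * (Q * Y * R)).trace = (Yᵀ * Q * Y * R).trace := by
  have h1 : (Q * Y * R)ᵀ * (Q * Y * R) = R * (Yᵀ * (Q * Q) * (Y * R)) := by
    rw [Matrix.transpose_mul, Matrix.transpose_mul, hQs, hRs]; noncomm_ring
  rw [h1, Matrix.trace_mul_comm, hQ2,
    show Yᵀ * Q * (Y * R) * R = Yᵀ * Q * Y * (R * R) from by noncomm_ring, hR2]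

lemma proj_contract {n : ℕ} (P Y : Matrix (Fin n) (Fin n) ℝ)
    (hPs : Pᵀ = P) (hP2 : P * P = P) :
    (((1 - P) * Y * (1 - P))ᵀ * ((1 - P) * Y * (1 - P))).trace ≤
      (Yᵀ * Y).trace - (Yᵀ * P * Y).trace := by
  set Q : Matrix (Fin n) (Fin n) ℝ := 1 - P with hQ
  have hQs : Qᵀ = Q := by
    rw [hQ, Matrix.transpose_sub, Matrix.transpose_one, hPs]
  have hQ2 : Q * Q = Q := by
    have h : (1 - P) * (1 - P) = 1 - P - (P - P * P) := by noncomm_ring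
    rw [hQ, h, hP2, sub_self, sub_zero]
  have e1 := trace_sandwich Q Q Y hQs hQ2 hQs hQ2
  have e2 := trace_sandwich Q P Y hQs hQ2 hPs hP2
  have esum : (Yᵀ * Q * Y * Q).trace + (Yᵀ * Q * Y * P).trace = (Yᵀ * Q * Y).trace := by
    rw [← Matrix.trace_add, ← Matrix.mul_add, hQ, sub_add_cancel, Matrix.mul_one]
  have eheart : (Yᵀ * Q * Y).trace = (Yᵀ * Y).trace - (Yᵀ * P * Y).trace := by
    rw [hQ, show Yᵀ * (1 - P) * Y = Yᵀ * Y - Yᵀ * P * Y from by noncomm_ring,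
      Matrix.trace_sub]
  have hnn := trace_transpose_mul_self_nonneg (Q * Y * P)
  rw [e1]
  rw [e2] at hnn
  linarith [esum, eheart]

lemma trace_quad_nonneg {n : ℕ} {B : Matrix (Fin n) (Fin n) ℝ}
    (hB : B.PosSemidef) (Y : Matrix (Fin n) (Fin n) ℝ) :
    0 ≤ (Yᵀ * B * Y).trace := by
  obtain ⟨C, rfl⟩ := psd_iff_eq_ct_mul_self.mp hB
  have h : Yᵀ * (Cᴴ * C) * Y = (C * Y)ᵀ * (C * Y) := by
    rw [Matrix.conjTranspose_eq_transpose_of_trivial, Matrix.transpose_mul]; noncomm_ring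
  rw [h]
  exact trace_transpose_mul_self_nonneg (C * Y)

lemma sub_iInf_eig_posSemidef {n : ℕ} (hn : 0 < n) {B : Matrix (Fin n) (Fin n) ℝ}
    (hB : B.IsHermitian) :
    (B - (⨅ j, hB.eigenvalues j) • 1).PosSemidef := by
  haveI : Nonempty (Fin n) := ⟨⟨0, hn⟩⟩
  set μ : ℝ := ⨅ j, hB.eigenvalues j with hμ
  have hle : ∀ j, μ ≤ hB.eigenvalues j := fun j =>
    ciInf_le (Finite.bddBelow_range _) j
  set U : Matrix (Fin n) (Fin n) ℝ := (hB.eigenvectorUnitary : Matrix (Fin n) (Fin n) ℝ) with hU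
  have hUU : U * star U = 1 := (Matrix.mem_unitaryGroup_iff).mp hB.eigenvectorUnitary.2
  have hspec : B = U * Matrix.diagonal (RCLike.ofReal ∘ hB.eigenvalues) * star U :=
    hB.spectral_theorem
  have hdiag : Matrix.diagonal (RCLike.ofReal ∘ hB.eigenvalues) =
      Matrix.diagonal hB.eigenvalues := by
    congr 1
  have hone : U * (μ • (1 : Matrix (Fin n) (Fin n) ℝ)) * star U = μ • 1 := by
    rw [Matrix.mul_smul, Matrix.mul_one, Matrix.smul_mul, hUU]
  have key : U * (Matrix.diagonal (fun j => hB.eigenvalues j - μ)) * star U = B - μ • 1 := by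
    rw [show Matrix.diagonal (fun j => hB.eigenvalues j - μ)
          = Matrix.diagonal hB.eigenvalues - μ • 1 from by
        rw [Matrix.smul_one_eq_diagonal, Matrix.diagonal_sub],
      Matrix.mul_sub, Matrix.sub_mul, hone, ← hdiag, ← hspec]
  rw [← key, Matrix.star_eq_conjTranspose]
  exact (Matrix.PosSemidef.diagonal fun j => sub_nonneg.mpr (hle j)).mul_mul_conjTranspose_same U

lemma posSemidef_smul' {n : ℕ} {B : Matrix (Fin n) (Fin n) ℝ} (hB : B.PosSemidef)
    {c : ℝ} (hc : 0 ≤ c) : (c • B).PosSemidef := by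
  refine ⟨?_, fun x => ?_⟩
  · unfold Matrix.IsHermitian
    rw [Matrix.conjTranspose_smul, hB.1]
    simp
  · exact (hB.smul hc).2 x

lemma posSemidef_sum' {n r : ℕ} (F : Fin r → Matrix (Fin n) (Fin n) ℝ)
    (hF : ∀ i, (F i).PosSemidef) : (∑ i, F i).PosSemidef := by
  classical
  exact Finset.sum_induction F _ (fun a b ha hb => ha.add hb) Matrix.PosSemidef.zero
    fun i _ => hF i

lemma gram_posDef {n q : ℕ} (A W : Matrix (Fin n) (Fin n) ℝ)
    (S : Matrix (Fin n) (Fin q) ℝ)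
    (hA : IsUnit A.det) (hAsym : Aᵀ = A) (hW : W.PosDef) (hS : S.rank = q) :
    (Sᵀ * A * W * A * S).PosDef := by
  have hWs : Wᵀ = W := by
    rw [← Matrix.conjTranspose_eq_transpose_of_trivial, hW.1]
  have hG : Sᵀ * A * W * A * S = (A * S)ᵀ * W * (A * S) := by
    rw [Matrix.transpose_mul, hAsym, Matrix.mul_assoc]
  have hSker : LinearMap.ker S.mulVecLin = ⊥ := by
    have h1 := LinearMap.finrank_range_add_finrank_ker S.mulVecLin
    have h2 : Module.finrank ℝ (Fin q → ℝ) = q := by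
      simp [Module.finrank_pi]
    have h3 : Module.finrank ℝ (LinearMap.range S.mulVecLin) = q := hS
    rw [h2, h3] at h1
    have h4 : Module.finrank ℝ (LinearMap.ker S.mulVecLin) = 0 := by omega
    exact Submodule.finrank_eq_zero.mp h4
  have hSinj : Function.Injective S.mulVec := by
    have := LinearMap.ker_eq_bot.mp hSker
    intro x y hxy
    exact this hxy
  have hAinj : Function.Injective A.mulVec :=
    Matrix.mulVec_injective_iff_isUnit.mpr ((Matrix.isUnit_iff_isUnit_det A).mpr hA)
  rw [hG]
  refine Matrix.PosDef.of_dotProduct_mulVec_pos ?_ ?_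
  · unfold Matrix.IsHermitian
    rw [Matrix.conjTranspose_eq_transpose_of_trivial]
    simp [Matrix.transpose_mul, hWs, Matrix.mul_assoc]
  · intro x hx
    have hBx : (A * S) *ᵥ x ≠ 0 := by
      rw [← Matrix.mulVec_mulVec]
      intro h
      apply hx
      have h0 : A *ᵥ (S *ᵥ x) = A *ᵥ 0 := by rw [h, Matrix.mulVec_zero]
      have h1 : S *ᵥ x = 0 := hAinj h0
      have h2 : S *ᵥ x = S *ᵥ 0 := by rw [h1, Matrix.mulVec_zero]
      exact hSinj h2
    have hmv : ((A * S)ᵀ * W * (A * S)) *ᵥ x = (A * S)ᵀ *ᵥ (W *ᵥ ((A * S) *ᵥ x)) := by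
      rw [← Matrix.mulVec_mulVec, ← Matrix.mulVec_mulVec]
    rw [hmv, star_trivial, Matrix.dotProduct_mulVec, Matrix.vecMul_transpose]
    have := hW.dotProduct_mulVec_pos hBx
    rwa [star_trivial] at this

lemma Z_props {n q : ℕ} (A W : Matrix (Fin n) (Fin n) ℝ)
    (S : Matrix (Fin n) (Fin q) ℝ)
    (hA : IsUnit A.det) (hAsym : Aᵀ = A) (hW : W.PosDef) (hS : S.rank = q) :
    (ZmatSym A W S)ᵀ = ZmatSym A W S ∧
      ZmatSym A W S * W * ZmatSym A W S = ZmatSym A W S := by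
  simp only [ZmatSym]
  set G := Sᵀ * A * W * A * S with hGdef
  have hGpd : G.PosDef := gram_posDef A W S hA hAsym hW hS
  have hGdet : IsUnit G.det := (Matrix.isUnit_iff_isUnit_det _).mp hGpd.isUnit
  have hGs : Gᵀ = G := by
    rw [← Matrix.conjTranspose_eq_transpose_of_trivial, hGpd.1]
  have hGiT : (G⁻¹)ᵀ = G⁻¹ := by rw [Matrix.transpose_nonsing_inv, hGs]
  constructor
  · simp [Matrix.transpose_mul, hAsym, hGiT, Matrix.mul_assoc]
  · have e1 : A * S * G⁻¹ * Sᵀ * A * W * (A * S * G⁻¹ * Sᵀ * A)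
        = (A * S * G⁻¹) * G * (G⁻¹ * (Sᵀ * A)) := by
      rw [hGdef]; simp only [Matrix.mul_assoc]
    rw [e1, show (A * S * G⁻¹) * G * (G⁻¹ * (Sᵀ * A))
        = A * S * (G⁻¹ * G * (G⁻¹ * (Sᵀ * A))) from by simp only [Matrix.mul_assoc],
      Matrix.nonsing_inv_mul _ hGdet, Matrix.one_mul]
    simp only [Matrix.mul_assoc]

theorem stmt13 {n r : ℕ} (hn : 0 < n) (A W : Matrix (Fin n) (Fin n) ℝ)
    (q : Fin r → ℕ) (S : ∀ i, Matrix (Fin n) (Fin (q i)) ℝ)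
    (hA : IsUnit A.det) (hAsym : Aᵀ = A) (hW : W.PosDef)
    (hS : ∀ i, (S i).rank = q i)
    (p : Fin r → ℝ) (hp : ∀ i, 0 < p i) (hsum : ∑ i, p i = 1)
    (X0 : Matrix (Fin n) (Fin n) ℝ) (hX0 : X0ᵀ = X0) (k : ℕ)
    (hM : (posSemidefSqrtOld hW.posSemidef * (∑ i, p i • ZmatSym A W (S i)) *
      posSemidefSqrtOld hW.posSemidef).IsHermitian) :
    ∑ s : Fin k → Fin r, (∏ j, p (s j)) *
        wFNormSq W ((List.ofFn s).foldl (fun X i => symStep A W (S i) X) X0 - A⁻¹) ≤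
      (1 - ⨅ j, hM.eigenvalues j) ^ k * wFNormSq W (X0 - A⁻¹) := by
  classical
  set M : Matrix (Fin n) (Fin n) ℝ := posSemidefSqrtOld hW.posSemidef with hMdef
  set μ : ℝ := ⨅ j, hM.eigenvalues j with hμdef
  have hMs : Mᵀ = M := by
    rw [hMdef]; exact posSemidefSqrtOld_transpose hW.posSemidef
  have hMM : M * M = W := by rw [hMdef]; exact posSemidefSqrtOld_mul_self hW.posSemidef
  clear_value M μ
  have hdetM : IsUnit M.det := by
    rw [isUnit_iff_ne_zero]
    intro h
    have h1 : M.det * M.det = W.det := by rw [← Matrix.det_mul, hMM]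
    rw [h, mul_zero] at h1
    exact absurd h1.symm (ne_of_gt hW.det_pos)
  have hMiM : M⁻¹ * M = 1 := Matrix.nonsing_inv_mul M hdetM
  have hMMi : M * M⁻¹ = 1 := Matrix.mul_nonsing_inv M hdetM
  have hMiT : (M⁻¹)ᵀ = M⁻¹ := by rw [Matrix.transpose_nonsing_inv, hMs]
  have hWi : W⁻¹ = M⁻¹ * M⁻¹ := by rw [← hMM, Matrix.mul_inv_rev]
  set Z : Fin r → Matrix (Fin n) (Fin n) ℝ := fun i => ZmatSym A W (S i) with hZdef
  have hZapp : ∀ i, Z i = ZmatSym A W (S i) := fun i => by rw [hZdef]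
  have hZs : ∀ i, (Z i)ᵀ = Z i := fun i => by
    rw [hZapp i]; exact (Z_props A W (S i) hA hAsym hW (hS i)).1
  have hZWZ : ∀ i, Z i * W * Z i = Z i := fun i => by
    rw [hZapp i]; exact (Z_props A W (S i) hA hAsym hW (hS i)).2
  set P : Fin r → Matrix (Fin n) (Fin n) ℝ := fun i => M * Z i * M with hPdef
  have hPapp : ∀ i, P i = M * Z i * M := fun i => by rw [hPdef]
  clear_value Z P
  have hPs : ∀ i, (P i)ᵀ = P i := by
    intro i
    rw [hPapp i]
    simp [Matrix.transpose_mul, hMs, hZs i, Matrix.mul_assoc]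
  have hP2 : ∀ i, P i * P i = P i := by
    intro i
    rw [hPapp i]
    have e : M * Z i * M * (M * Z i * M) = M * (Z i * (M * M) * Z i) * M := by noncomm_ring
    rw [e, hMM, hZWZ i]
  -- weighted norm in transformed coordinates
  have hwf : ∀ R : Matrix (Fin n) (Fin n) ℝ,
      wFNormSq W R = ((M⁻¹ * R * M⁻¹)ᵀ * (M⁻¹ * R * M⁻¹)).trace := by
    intro R
    rw [wFNormSq, hWi]
    have h : (M⁻¹ * R * M⁻¹)ᵀ * (M⁻¹ * R * M⁻¹)
        = M⁻¹ * (Rᵀ * (M⁻¹ * M⁻¹) * R * M⁻¹) := by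
      rw [Matrix.transpose_mul, Matrix.transpose_mul, hMiT]; noncomm_ring
    rw [h, Matrix.trace_mul_comm M⁻¹ (Rᵀ * (M⁻¹ * M⁻¹) * R * M⁻¹)]
    congr 1
    noncomm_ring
  -- residual form of the step
  have hres : ∀ i (X : Matrix (Fin n) (Fin n) ℝ),
      symStep A W (S i) X - A⁻¹ = (1 - W * Z i) * (X - A⁻¹) * (1 - Z i * W) := by
    intro i X
    rw [symStep, add_sub_cancel_left, hZapp i]
  have hMW : M⁻¹ * W = M := by rw [← hMM, ← Matrix.mul_assoc, hMiM, Matrix.one_mul]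
  have hWM : W * M⁻¹ = M := by rw [← hMM, Matrix.mul_assoc, hMMi, Matrix.mul_one]
  have htrans : ∀ i (R : Matrix (Fin n) (Fin n) ℝ),
      M⁻¹ * ((1 - W * Z i) * R * (1 - Z i * W)) * M⁻¹
        = (1 - P i) * (M⁻¹ * R * M⁻¹) * (1 - P i) := by
    intro i R
    have h1 : M⁻¹ * (1 - W * Z i) = (1 - P i) * M⁻¹ := by
      rw [Matrix.mul_sub, Matrix.sub_mul, Matrix.mul_one, Matrix.one_mul]
      congr 1
      rw [hPapp i, ← Matrix.mul_assoc, hMW, Matrix.mul_assoc, hMMi, Matrix.mul_one]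
    have h2 : (1 - Z i * W) * M⁻¹ = M⁻¹ * (1 - P i) := by
      rw [Matrix.mul_sub, Matrix.sub_mul, Matrix.mul_one, Matrix.one_mul]
      congr 1
      rw [hPapp i, Matrix.mul_assoc, hWM, ← Matrix.mul_assoc, ← Matrix.mul_assoc,
        hMiM, Matrix.one_mul]
    calc M⁻¹ * ((1 - W * Z i) * R * (1 - Z i * W)) * M⁻¹
        = (M⁻¹ * (1 - W * Z i)) * R * ((1 - Z i * W) * M⁻¹) := by noncomm_ring
      _ = ((1 - P i) * M⁻¹) * R * (M⁻¹ * (1 - P i)) := by rw [h1, h2]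
      _ = (1 - P i) * (M⁻¹ * R * M⁻¹) * (1 - P i) := by noncomm_ring
  set Mbar : Matrix (Fin n) (Fin n) ℝ := M * (∑ i, p i • ZmatSym A W (S i)) * M with hMbardef
  have hMbar_sum : Mbar = ∑ i, p i • P i := by
    rw [hMbardef, Matrix.mul_sum, Matrix.sum_mul]
    refine Finset.sum_congr rfl fun i _ => ?_
    rw [mul_smul_comm, smul_mul_assoc, hPapp i, hZapp i, Matrix.mul_assoc]
  have hPSD1 : (Mbar - μ • 1).PosSemidef := by
    have h := sub_iInf_eig_posSemidef hn hM
    rwa [← hμdef] at h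
  have hQPSD : ∀ i, (1 - P i).PosSemidef := by
    intro i
    refine psd_iff_eq_ct_mul_self.mpr ⟨1 - P i, ?_⟩
    have hQs : (1 - P i)ᵀ = 1 - P i := by
      rw [Matrix.transpose_sub, Matrix.transpose_one, hPs i]
    have hQ2 : (1 - P i) * (1 - P i) = 1 - P i := by
      have h : (1 - P i) * (1 - P i) = 1 - P i - (P i - P i * P i) := by noncomm_ring
      rw [h, hP2 i, sub_self, sub_zero]
    rw [Matrix.conjTranspose_eq_transpose_of_trivial, hQs, hQ2]
  have hPSD2 : ((1 : Matrix (Fin n) (Fin n) ℝ) - Mbar).PosSemidef := by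
    have hsplit : (1 : Matrix (Fin n) (Fin n) ℝ) - Mbar = ∑ i, p i • (1 - P i) := by
      have : ∀ i : Fin r, p i • ((1 : Matrix (Fin n) (Fin n) ℝ) - P i)
          = p i • (1 : Matrix (Fin n) (Fin n) ℝ) - p i • P i := fun i => smul_sub _ _ _
      rw [Finset.sum_congr rfl fun i _ => this i, Finset.sum_sub_distrib,
        ← Finset.sum_smul, hsum, one_smul, hMbar_sum]
    rw [hsplit]
    exact posSemidef_sum' _ fun i => posSemidef_smul' (hQPSD i) (hp i).le
  have hρ : 0 ≤ 1 - μ := by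
    have h := hPSD1.add hPSD2
    have e : (Mbar - μ • 1) + (1 - Mbar) = (1 - μ) • (1 : Matrix (Fin n) (Fin n) ℝ) := by
      rw [sub_smul, one_smul, add_comm, sub_add_sub_cancel]
    rw [e, Matrix.smul_one_eq_diagonal] at h
    exact (Matrix.posSemidef_diagonal_iff.mp h) ⟨0, hn⟩
  -- one-step expected contraction
  have hstep : ∀ X : Matrix (Fin n) (Fin n) ℝ,
      ∑ i, p i * wFNormSq W (symStep A W (S i) X - A⁻¹)
        ≤ (1 - μ) * wFNormSq W (X - A⁻¹) := by
    intro X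
    set Y : Matrix (Fin n) (Fin n) ℝ := M⁻¹ * (X - A⁻¹) * M⁻¹ with hYdef
    have hterm : ∀ i, wFNormSq W (symStep A W (S i) X - A⁻¹)
        = (((1 - P i) * Y * (1 - P i))ᵀ * ((1 - P i) * Y * (1 - P i))).trace := by
      intro i
      rw [hwf, hres i X, htrans i]
    have hMbarQ : (Yᵀ * Mbar * Y).trace = ∑ i, p i * (Yᵀ * P i * Y).trace := by
      have h1 : Yᵀ * Mbar * Y = ∑ i, p i • (Yᵀ * P i * Y) := by
        rw [hMbar_sum, Matrix.mul_sum, Matrix.sum_mul]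
        refine Finset.sum_congr rfl fun i _ => ?_
        rw [mul_smul_comm, smul_mul_assoc]
      rw [h1, Matrix.trace_sum]
      simp [Matrix.trace_smul]
    have hlow : μ * (Yᵀ * Y).trace ≤ (Yᵀ * Mbar * Y).trace := by
      have h0 := trace_quad_nonneg hPSD1 Y
      have h2 : Yᵀ * (Mbar - μ • (1 : Matrix (Fin n) (Fin n) ℝ)) * Y
          = Yᵀ * Mbar * Y - μ • (Yᵀ * Y) := by
        rw [Matrix.mul_sub, Matrix.sub_mul, mul_smul_comm, Matrix.mul_one, smul_mul_assoc]
      rw [h2, Matrix.trace_sub, Matrix.trace_smul, smul_eq_mul] at h0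
      linarith
    calc ∑ i, p i * wFNormSq W (symStep A W (S i) X - A⁻¹)
        = ∑ i, p i * (((1 - P i) * Y * (1 - P i))ᵀ * ((1 - P i) * Y * (1 - P i))).trace :=
          Finset.sum_congr rfl fun i _ => by rw [hterm i]
      _ ≤ ∑ i, p i * ((Yᵀ * Y).trace - (Yᵀ * P i * Y).trace) :=
          Finset.sum_le_sum fun i _ =>
            mul_le_mul_of_nonneg_left (proj_contract (P i) Y (hPs i) (hP2 i)) (hp i).le
      _ = (Yᵀ * Y).trace - (Yᵀ * Mbar * Y).trace := by
          rw [hMbarQ]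
          simp only [mul_sub]
          rw [Finset.sum_sub_distrib, ← Finset.sum_mul, hsum, one_mul]
      _ ≤ (Yᵀ * Y).trace - μ * (Yᵀ * Y).trace := by linarith
      _ = (1 - μ) * wFNormSq W (X - A⁻¹) := by rw [hwf]; ring
  -- induction over path length
  have main : ∀ (m : ℕ) (X : Matrix (Fin n) (Fin n) ℝ),
      ∑ s : Fin m → Fin r, (∏ j, p (s j)) *
          wFNormSq W ((List.ofFn s).foldl (fun X i => symStep A W (S i) X) X - A⁻¹)
        ≤ (1 - μ) ^ m * wFNormSq W (X - A⁻¹) := by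
    intro m
    induction m with
    | zero =>
        intro X
        simp
    | succ m ih =>
        intro X
        have hsplit : ∀ (F : (Fin (m + 1) → Fin r) → ℝ),
            ∑ s, F s = ∑ i : Fin r, ∑ t : Fin m → Fin r, F (Fin.cons i t) := by
          intro F
          have h1 : ∑ y : Fin r × (Fin m → Fin r), F (Fin.cons y.1 y.2) = ∑ s, F s :=
            Fintype.sum_equiv (Fin.consEquiv fun _ => Fin r)
              (fun y => F (Fin.cons y.1 y.2)) F (fun y => by simp [Fin.consEquiv])
          rw [← h1, Fintype.sum_prod_type]
        rw [hsplit]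
        have hterm : ∀ (i : Fin r) (t : Fin m → Fin r),
            (∏ j : Fin (m + 1), p ((Fin.cons i t : Fin (m + 1) → Fin r) j)) *
              wFNormSq W ((List.ofFn (Fin.cons i t : Fin (m + 1) → Fin r)).foldl
                (fun X i => symStep A W (S i) X) X - A⁻¹)
            = p i * ((∏ j, p (t j)) *
              wFNormSq W ((List.ofFn t).foldl
                (fun X i => symStep A W (S i) X) (symStep A W (S i) X) - A⁻¹)) := by
          intro i t
          rw [Fin.prod_univ_succ]
          simp [List.ofFn_succ, Fin.cons_zero, Fin.cons_succ, mul_assoc]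
        calc ∑ i : Fin r, ∑ t : Fin m → Fin r, (∏ j : Fin (m + 1), p ((Fin.cons i t : Fin (m + 1) → Fin r) j)) *
              wFNormSq W ((List.ofFn (Fin.cons i t : Fin (m + 1) → Fin r)).foldl
                (fun X i => symStep A W (S i) X) X - A⁻¹)
            = ∑ i : Fin r, p i * ∑ t : Fin m → Fin r, (∏ j, p (t j)) *
              wFNormSq W ((List.ofFn t).foldl
                (fun X i => symStep A W (S i) X) (symStep A W (S i) X) - A⁻¹) := by
              refine Finset.sum_congr rfl fun i _ => ?_
              rw [Finset.mul_sum]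
              exact Finset.sum_congr rfl fun t _ => hterm i t
          _ ≤ ∑ i : Fin r, p i * ((1 - μ) ^ m * wFNormSq W (symStep A W (S i) X - A⁻¹)) :=
              Finset.sum_le_sum fun i _ =>
                mul_le_mul_of_nonneg_left (ih (symStep A W (S i) X)) (hp i).le
          _ = (1 - μ) ^ m * ∑ i, p i * wFNormSq W (symStep A W (S i) X - A⁻¹) := by
              rw [Finset.mul_sum]
              exact Finset.sum_congr rfl fun i _ => by ring
          _ ≤ (1 - μ) ^ m * ((1 - μ) * wFNormSq W (X - A⁻¹)) :=
              mul_le_mul_of_nonneg_left (hstep X) (pow_nonneg hρ m)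
          _ = (1 - μ) ^ (m + 1) * wFNormSq W (X - A⁻¹) := by ring
  exact main k X0
end
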